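/- With the setup of the deceptive quadratic game: costs J_i(x) = ½ xᵀ A_i x + b_iᵀ x + c_i with A_i symmetric; pseudogradient data [𝒜]_{i:} = [A_i]_{i:}, [ℬ]_i = [b_i]_i; deceptive sets 𝒟, 𝒟_k, 𝒦_i = {k ∈ 𝒟 : i ∈ 𝒟_k}; perturbed data [Ā(δ)]_{i:} = [𝒜]_{i:} + Σ_{k∈𝒦_i} δ_k [A_i]_{k:} and [B̄(δ)]_i = [ℬ]_i + Σ_{k∈𝒦_i} δ_k [b_i]_k; Gaussian measures μ_i on ℝ with density (1/(√π q_i)) e^{-z²/q_i²}, product μ = μ_1 × ⋯ × μ_N; bounded measurable odd functions f_1,…,f_N; amplitudes a_1,…,a_N > 0; γ_i = ∫_ℝ f_i(s)² dμ_i(s); and η̄ : ℝ^N → ℝ^N given by [η̄(z)]_k = a_k f_k(z_k) + δ_k Σ_{j∈𝒟_k} a_j f_j(z_j) for k ∈ 𝒟 and [η̄(z)]_k = a_k f_k(z_k) otherwise. Then for every u ∈ ℝ^N and every i ∈ {1,…,N}, ∫_{ℝ^N} f_i(z_i) · J_i(u + η̄(z)) dμ(z) = a_i γ_i · [Ā(δ)u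 + B̄(δ)]_i. -/

import Mathlib

open MeasureTheory Matrix Finset

noncomputable def gmeas (q : ℝ) : Measure ℝ :=
  volume.withDensity fun z =>
    ENNReal.ofReal ((Real.sqrt Real.pi * q)⁻¹ * Real.exp (-z ^ 2 / q ^ 2))

lemma gmeas_eq {q : ℝ} (hq : 0 < q) :
    gmeas q = ProbabilityTheory.gaussianReal 0 ⟨q ^ 2 / 2, by positivity⟩ := by
  set v : NNReal := ⟨q ^ 2 / 2, by positivity⟩ with hvdef
  have hvc : (v : ℝ) = q ^ 2 / 2 := rfl
  have hv : v ≠ 0 := by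
    intro h
    have : (v : ℝ) = 0 := by rw [h]; simp
    rw [hvc] at this
    have : q ^ 2 = 0 := by linarith
    exact (pow_ne_zero 2 hq.ne') this
  rw [ProbabilityTheory.gaussianReal_of_var_ne_zero _ hv, gmeas]
  congr 1
  funext x
  unfold ProbabilityTheory.gaussianPDF ProbabilityTheory.gaussianPDFReal
  congr 1
  have h1 : (2 * Real.pi * (v : ℝ)) = Real.pi * q ^ 2 := by rw [hvc]; ring
  have h2 : (2 * (v : ℝ)) = q ^ 2 := by rw [hvc]; ring
  rw [h1, h2]
  have : Real.sqrt (Real.pi * q ^ 2) = Real.sqrt Real.pi * q := by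
    rw [Real.sqrt_mul Real.pi_pos.le, Real.sqrt_sq hq.le]
  rw [this]
  ring_nf

lemma gmeas_map_neg {q : ℝ} (hq : 0 < q) :
    (gmeas q).map (fun x : ℝ => -x) = gmeas q := by
  have h := ProbabilityTheory.gaussianReal_map_const_mul
    (μ := 0) (v := ⟨q ^ 2 / 2, by positivity⟩) (-1)
  rw [gmeas_eq hq]
  have hfun : (fun x : ℝ => -x) = (fun x : ℝ => (-1) * x) := by funext x; ring
  rw [hfun]
  show (ProbabilityTheory.gaussianReal 0 _).map ((-1 : ℝ) * ·) = _
  rw [h]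
  norm_num
  exact congrArg (ProbabilityTheory.gaussianReal 0) (one_mul (_ : NNReal))

lemma gmeas_odd_int {q : ℝ} (hq : 0 < q) {g : ℝ → ℝ} (hg : Measurable g)
    (hodd : ∀ x, g (-x) = -g x) : ∫ x, g x ∂gmeas q = 0 := by
  have h1 : ∫ x, g x ∂gmeas q = ∫ x, g (-x) ∂gmeas q := by
    conv_lhs => rw [← gmeas_map_neg hq]
    rw [integral_map measurable_neg.aemeasurable hg.aestronglyMeasurable]
  have h2 : ∫ x, g (-x) ∂gmeas q = -∫ x, g x ∂gmeas q := by
    simp_rw [hodd]; exact integral_neg g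
  linarith [h1, h2]

lemma pi_prod_integral {N : ℕ} (ν : Fin N → Measure ℝ) (hsf : ∀ l, SigmaFinite (ν l))
    (g : Fin N → ℝ → ℝ) :
    ∫ z : Fin N → ℝ, ∏ l, g l (z l) ∂(Measure.pi ν) = ∏ l, ∫ x, g l x ∂(ν l) :=
  by haveI := hsf; exact MeasureTheory.integral_fintype_prod_eq_prod (E := fun _ => ℝ) g

theorem stmt8 (N : ℕ) (q a : Fin N → ℝ) (hq : ∀ i, 0 < q i) (ha : ∀ i, 0 < a i)
    (f : Fin N → ℝ → ℝ)
    (hmeas : ∀ i, Measurable (f i))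
    (hbd : ∀ i, ∃ C : ℝ, ∀ s, |f i s| ≤ C)
    (hodd : ∀ i s, f i (-s) = -f i s)
    (A : Fin N → Matrix (Fin N) (Fin N) ℝ) (hsymm : ∀ i, (A i).IsSymm)
    (b : Fin N → Fin N → ℝ) (c : Fin N → ℝ)
    (J : Fin N → (Fin N → ℝ) → ℝ)
    (hJ : ∀ i x, J i x = (1 / 2) * (x ⬝ᵥ (A i).mulVec x) + (b i) ⬝ᵥ x + c i)
    (𝒜 : Matrix (Fin N) (Fin N) ℝ) (h𝒜 : ∀ i j, 𝒜 i j = A i i j)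
    (ℬ : Fin N → ℝ) (hℬ : ∀ i, ℬ i = b i i)
    (𝒟 : Finset (Fin N)) (Dset : Fin N → Finset (Fin N))
    (hD : ∀ k ∈ 𝒟, k ∉ Dset k)
    (𝒦 : Fin N → Finset (Fin N)) (h𝒦 : ∀ i, 𝒦 i = 𝒟.filter fun k => i ∈ Dset k)
    (δ : Fin N → ℝ)
    (Abar : Matrix (Fin N) (Fin N) ℝ)
    (hAbar : ∀ i j, Abar i j = 𝒜 i j + ∑ k ∈ 𝒦 i, δ k * A i k j)
    (Bbar : Fin N → ℝ)
    (hBbar : ∀ i, Bbar i = ℬ i + ∑ k ∈ 𝒦 i, δ k * b i k)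
    (γ : Fin N → ℝ) (hγ : ∀ l, γ l = ∫ s : ℝ, (f l s) ^ 2 ∂(gmeas (q l)))
    (etabar : (Fin N → ℝ) → Fin N → ℝ)
    (heta : ∀ z k, etabar z k =
      if k ∈ 𝒟 then a k * f k (z k) + δ k * ∑ j ∈ Dset k, a j * f j (z j)
      else a k * f k (z k)) :
    ∀ (u : Fin N → ℝ) (i : Fin N),
      ∫ z : Fin N → ℝ, f i (z i) * J i (u + etabar z)
          ∂(Measure.pi fun l => gmeas (q l)) =
        a i * γ i * (Abar.mulVec u + Bbar) i := by
  classical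
  intro u i
  haveI hPM : ∀ l, IsProbabilityMeasure (gmeas (q l)) := fun l => by
    rw [gmeas_eq (hq l)]; exact ProbabilityTheory.instIsProbabilityMeasureGaussianReal _ _
  haveI hSF : ∀ l, SigmaFinite (gmeas (q l)) := fun l => inferInstance
  set μpi : Measure (Fin N → ℝ) := Measure.pi (fun l => gmeas (q l)) with hμpidef
  haveI hPMpi : IsProbabilityMeasure μpi := by
    rw [hμpidef]; infer_instance
  -- basic measurability and boundedness
  choose B hB using hbd
  have hB0 : ∀ l, 0 ≤ B l := fun l => le_trans (abs_nonneg _) (hB l 0)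
  have hw : ∀ l, Measurable fun z : Fin N → ℝ => f l (z l) :=
    fun l => (hmeas l).comp (measurable_pi_apply l)
  have hint : ∀ (g : (Fin N → ℝ) → ℝ) (Cg : ℝ), Measurable g → (∀ z, |g z| ≤ Cg) →
      Integrable g μpi := fun g Cg hg hb =>
    ⟨hg.aestronglyMeasurable,
      HasFiniteIntegral.of_bounded (C := Cg) (ae_of_all _ fun z => by
        simpa [Real.norm_eq_abs] using hb z)⟩
  have hI1 : Integrable (fun z : Fin N → ℝ => f i (z i)) μpi :=
    hint _ (B i) (hw i) (fun z => hB i _)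
  have hI2 : ∀ l, Integrable (fun z : Fin N → ℝ => f i (z i) * f l (z l)) μpi := fun l =>
    hint _ (B i * B l) ((hw i).mul (hw l)) (fun z => by
      rw [abs_mul]
      exact mul_le_mul (hB i _) (hB l _) (abs_nonneg _) (hB0 i))
  have hI3 : ∀ l m, Integrable
      (fun z : Fin N → ℝ => f i (z i) * (f l (z l) * f m (z m))) μpi := fun l m =>
    hint _ (B i * (B l * B m)) ((hw i).mul ((hw l).mul (hw m))) (fun z => by
      rw [abs_mul, abs_mul]
      refine mul_le_mul (hB i _) ?_ (mul_nonneg (abs_nonneg _) (abs_nonneg _)) (hB0 i)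
      exact mul_le_mul (hB l _) (hB m _) (abs_nonneg _) (hB0 l))
  -- moments
  have modd : ∀ (l : Fin N) (n : ℕ), Odd n → ∫ x, f l x ^ n ∂gmeas (q l) = 0 := by
    intro l n hn
    exact gmeas_odd_int (hq l) ((hmeas l).pow_const n)
      (fun x => by rw [hodd l x, hn.neg_pow])
  have hME : ∀ E : Fin N → ℕ,
      ∫ z : Fin N → ℝ, ∏ l, f l (z l) ^ E l ∂μpi = ∏ l, ∫ x, f l x ^ E l ∂gmeas (q l) := by
    intro E
    rw [hμpidef]
    exact pi_prod_integral (fun l => gmeas (q l)) hSF (fun l x => f l x ^ E l)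
  have hMzero : ∀ (E : Fin N → ℕ) (j : Fin N), Odd (E j) →
      (∫ z : Fin N → ℝ, ∏ l, f l (z l) ^ E l ∂μpi) = 0 := fun E j hj => by
    rw [hME]
    exact Finset.prod_eq_zero (mem_univ j) (modd j _ hj)
  have hPW1 : ∀ (w : Fin N → ℝ) (j : Fin N),
      (∏ l, w l ^ (if l = j then 1 else 0)) = w j := fun w j => by
    simp [pow_ite, Finset.prod_ite_eq']
  have M1 : ∫ z : Fin N → ℝ, f i (z i) ∂μpi = 0 := by
    have hrepr : (fun z : Fin N → ℝ => f i (z i))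
        = fun z => ∏ l, f l (z l) ^ (if l = i then 1 else 0) :=
      funext fun z => (hPW1 (fun l => f l (z l)) i).symm
    rw [hrepr]
    exact hMzero _ i (by simp)
  have M2 : ∀ l, (∫ z : Fin N → ℝ, f i (z i) * f l (z l) ∂μpi)
      = if l = i then γ i else 0 := by
    intro l
    have hrepr : (fun z : Fin N → ℝ => f i (z i) * f l (z l))
        = fun z => ∏ j, f j (z j) ^ ((if j = i then 1 else 0) + (if j = l then 1 else 0)) := by
      funext z
      simp only [pow_add, Finset.prod_mul_distrib, hPW1]
    rw [hrepr]
    by_cases hli : l = i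
    · subst hli
      rw [if_pos rfl, hME]
      refine Finset.prod_eq_single_of_mem l (mem_univ l) ?_ |>.trans ?_
      · intro j _ hjl
        simp only [if_neg hjl]
        haveI := hPM j
        simp
      · norm_num
        exact (hγ l).symm
    · rw [if_neg hli]
      refine hMzero _ l ?_
      simp [hli]
  have M3 : ∀ l m, (∫ z : Fin N → ℝ, f i (z i) * (f l (z l) * f m (z m)) ∂μpi) = 0 := by
    intro l m
    have hrepr : (fun z : Fin N → ℝ => f i (z i) * (f l (z l) * f m (z m)))
        = fun z => ∏ j, f j (z j) ^
          ((if j = i then 1 else 0) + ((if j = l then 1 else 0) + (if j = m then 1 else 0))) := by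
      funext z
      simp only [pow_add, Finset.prod_mul_distrib, hPW1]
    have hsum : (∑ j, ((if j = i then 1 else 0) + ((if j = l then 1 else 0)
        + (if j = m then 1 else 0)))) = 3 := by
      simp [Finset.sum_add_distrib, Finset.sum_ite_eq']
    obtain ⟨j, hj⟩ : ∃ j, Odd ((if j = i then 1 else 0) + ((if j = l then 1 else 0)
        + (if j = m then 1 else 0))) := by
      by_contra h
      push_neg at h
      simp only [Nat.not_odd_iff_even] at h
      have he : Even (∑ j, ((if j = i then 1 else 0) + ((if j = l then 1 else 0)
          + (if j = m then 1 else 0)))) := Finset.even_sum _ fun j _ => h j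
      rw [hsum] at he
      rw [Nat.even_iff] at he
      norm_num at he
    rw [hrepr]
    exact hMzero _ j hj
  -- the mixing matrix (kept opaque, with defining equation hCapp)
  obtain ⟨C, hCapp⟩ : ∃ C : Matrix (Fin N) (Fin N) ℝ, ∀ k l, C k l =
      (if l = k then a k else 0) + (if k ∈ 𝒟 ∧ l ∈ Dset k then δ k * a l else 0) :=
    ⟨_, fun k l => rfl⟩
  have hmvC : ∀ (w : Fin N → ℝ) (k : Fin N), (C.mulVec w) k = ∑ l, C k l * w l :=
    fun w k => rfl
  have hetaC : ∀ z : Fin N → ℝ, etabar z = C.mulVec (fun l => f l (z l)) := by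
    intro z
    funext k
    rw [heta z k, hmvC]
    simp only [hCapp, add_mul, ite_mul, zero_mul, Finset.sum_add_distrib]
    rw [Finset.sum_ite_eq']
    simp only [Finset.mem_univ, if_true]
    by_cases hk : k ∈ 𝒟
    · simp only [hk, true_and, if_true]
      congr 1
      rw [Finset.sum_ite_mem, Finset.univ_inter, Finset.mul_sum]
      exact (Finset.sum_congr rfl fun j _ => by ring).symm
    · simp [hk]
  -- data for the expansion (opaque constants)
  obtain ⟨g, hgeq⟩ : ∃ g : Fin N → ℝ, g = (A i).mulVec u + b i := ⟨_, rfl⟩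
  obtain ⟨d, hdapp⟩ : ∃ d : Fin N → ℝ, ∀ l, d l = ∑ k, g k * C k l := ⟨_, fun l => rfl⟩
  obtain ⟨K, hKeq⟩ : ∃ K : ℝ, K = (1 / 2) * (u ⬝ᵥ (A i).mulVec u) + b i ⬝ᵥ u + c i :=
    ⟨_, rfl⟩
  have hsymA : (A i)ᵀ = A i := hsymm i
  have hcross : ∀ p : Fin N → ℝ, p ⬝ᵥ (A i).mulVec u = u ⬝ᵥ (A i).mulVec p := by
    intro p
    rw [Matrix.dotProduct_mulVec, ← Matrix.mulVec_transpose, hsymA, dotProduct_comm]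
  have hcross2 : ∀ p : Fin N → ℝ, ((A i).mulVec u) ⬝ᵥ p = u ⬝ᵥ (A i).mulVec p := by
    intro p
    rw [dotProduct_comm, hcross]
  have step1 : ∀ p : Fin N → ℝ,
      (1 / 2) * ((u + p) ⬝ᵥ (A i).mulVec (u + p)) + b i ⬝ᵥ (u + p) + c i
      = K + (g ⬝ᵥ p + (1 / 2) * (p ⬝ᵥ (A i).mulVec p)) := by
    intro p
    rw [hKeq, hgeq]
    simp only [Matrix.mulVec_add, dotProduct_add, add_dotProduct]
    rw [hcross p, hcross2 p]
    ring
  have stepd : ∀ w : Fin N → ℝ, g ⬝ᵥ C.mulVec w = ∑ l, d l * w l := by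
    intro w
    simp only [hdapp, dotProduct, Matrix.mulVec]
    simp only [Finset.mul_sum, Finset.sum_mul]
    rw [Finset.sum_comm]
    exact Finset.sum_congr rfl fun l _ => Finset.sum_congr rfl fun k _ => by ring
  have stepq : ∀ w : Fin N → ℝ,
      (1 / 2) * ((C.mulVec w) ⬝ᵥ (A i).mulVec (C.mulVec w)) * w i
      = ∑ k, ∑ m, ∑ l, ∑ l', ((1 / 2) * A i k m * (C k l * C m l'))
          * (w i * (w l * w l')) := by
    intro w
    simp only [dotProduct, Matrix.mulVec]
    simp only [Finset.mul_sum, Finset.sum_mul]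
    refine Finset.sum_congr rfl fun k _ => Finset.sum_congr rfl fun m _ => ?_
    rw [Finset.sum_comm]
    exact Finset.sum_congr rfl fun l _ => Finset.sum_congr rfl fun l' _ => by ring
  -- the pointwise expansion of the integrand
  have key : (fun z : Fin N → ℝ => f i (z i) * J i (u + etabar z))
      = fun z =>
        K * f i (z i)
        + (∑ l, d l * (f i (z i) * f l (z l)))
        + ∑ k, ∑ m, ∑ l, ∑ l', ((1 / 2) * A i k m * (C k l * C m l'))
            * (f i (z i) * (f l (z l) * f l' (z l'))) := by
    funext z
    rw [hJ, hetaC z, step1]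
    have h2 := stepd (fun l => f l (z l))
    have h3 := stepq (fun l => f l (z l))
    beta_reduce at h2 h3
    rw [h2, ← h3]
    have h4 : f i (z i) * (∑ l, d l * f l (z l))
        = ∑ l, d l * (f i (z i) * f l (z l)) := by
      rw [Finset.mul_sum]
      exact Finset.sum_congr rfl fun l _ => by ring
    linear_combination h4
  rw [key]
  -- integrate
  have hI2s : Integrable (fun z : Fin N → ℝ =>
      ∑ l, d l * (f i (z i) * f l (z l))) μpi :=
    integrable_finset_sum _ fun l _ => (hI2 l).const_mul (d l)
  have hI3a : ∀ k m l, Integrable (fun z : Fin N → ℝ =>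
      ∑ l', ((1 / 2) * A i k m * (C k l * C m l'))
        * (f i (z i) * (f l (z l) * f l' (z l')))) μpi :=
    fun k m l => integrable_finset_sum _ fun l' _ => (hI3 l l').const_mul _
  have hI3b : ∀ k m, Integrable (fun z : Fin N → ℝ =>
      ∑ l, ∑ l', ((1 / 2) * A i k m * (C k l * C m l'))
        * (f i (z i) * (f l (z l) * f l' (z l')))) μpi :=
    fun k m => integrable_finset_sum _ fun l _ => hI3a k m l
  have hI3c : Integrable (fun z : Fin N → ℝ =>
      ∑ k, ∑ m, ∑ l, ∑ l', ((1 / 2) * A i k m * (C k l * C m l'))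
        * (f i (z i) * (f l (z l) * f l' (z l')))) μpi :=
    integrable_finset_sum _ fun k _ =>
      integrable_finset_sum _ fun m _ => hI3b k m
  have hI12 : Integrable (fun z : Fin N → ℝ =>
      K * f i (z i) + ∑ l, d l * (f i (z i) * f l (z l))) μpi :=
    (hI1.const_mul K).add hI2s
  rw [integral_add hI12 hI3c]
  rw [integral_add (hI1.const_mul K) hI2s]
  have e1 : ∫ z : Fin N → ℝ, K * f i (z i) ∂μpi = 0 := by
    rw [integral_const_mul, M1, mul_zero]
  have e2 : (∫ z : Fin N → ℝ, ∑ l, d l * (f i (z i) * f l (z l)) ∂μpi) = d i * γ i := by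
    rw [integral_finset_sum _ fun l _ => (hI2 l).const_mul (d l)]
    have h2 : ∀ l, (∫ z : Fin N → ℝ, d l * (f i (z i) * f l (z l)) ∂μpi)
        = if l = i then d i * γ i else 0 := by
      intro l
      rw [integral_const_mul, M2 l]
      by_cases hli : l = i
      · subst hli; simp
      · simp [hli]
    rw [Finset.sum_congr rfl fun l _ => h2 l]
    simp
  have e3 : (∫ z : Fin N → ℝ, ∑ k, ∑ m, ∑ l, ∑ l',
      ((1 / 2) * A i k m * (C k l * C m l'))
        * (f i (z i) * (f l (z l) * f l' (z l'))) ∂μpi) = 0 := by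
    rw [integral_finset_sum _ fun k _ => integrable_finset_sum _ fun m _ => hI3b k m]
    refine Finset.sum_eq_zero fun k _ => ?_
    rw [integral_finset_sum _ fun m _ => hI3b k m]
    refine Finset.sum_eq_zero fun m _ => ?_
    rw [integral_finset_sum _ fun l _ => hI3a k m l]
    refine Finset.sum_eq_zero fun l _ => ?_
    rw [integral_finset_sum _ fun l' _ => (hI3 l l').const_mul _]
    refine Finset.sum_eq_zero fun l' _ => ?_
    rw [integral_const_mul, M3, mul_zero]
  rw [e1, e2, e3, zero_add, add_zero]
  -- final algebra: d i = a i * ((Abar *ᵥ u) i + Bbar i)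
  have hfil : univ.filter (fun k => k ∈ 𝒟 ∧ i ∈ Dset k) = 𝒦 i := by
    ext k
    simp [h𝒦 i]
  have hdi : d i = a i * (g i + ∑ k ∈ 𝒦 i, δ k * g k) := by
    rw [hdapp i]
    simp only [hCapp, mul_add, mul_ite, mul_zero, Finset.sum_add_distrib]
    rw [Finset.sum_ite_eq]
    simp only [Finset.mem_univ, if_true]
    rw [← Finset.sum_filter, hfil]
    have hx : (∑ k ∈ 𝒦 i, g k * (δ k * a i)) = a i * ∑ k ∈ 𝒦 i, δ k * g k := by
      rw [Finset.mul_sum]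
      exact Finset.sum_congr rfl fun k _ => by ring
    rw [hx]
    ring
  have hgk : ∀ k, g k = (∑ j, A i k j * u j) + b i k := by
    intro k
    rw [hgeq]
    simp [Matrix.mulVec, dotProduct]
  have hAbarz : (Abar.mulVec u) i + Bbar i = g i + ∑ k ∈ 𝒦 i, δ k * g k := by
    have h1 : (Abar.mulVec u) i = (∑ j, A i i j * u j)
        + ∑ k ∈ 𝒦 i, δ k * ∑ j, A i k j * u j := by
      show (∑ j, Abar i j * u j) = _
      rw [Finset.sum_congr rfl (fun j _ => by rw [hAbar i j, h𝒜 i j, add_mul, Finset.sum_mul])]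
      rw [Finset.sum_add_distrib]
      congr 1
      rw [Finset.sum_comm]
      refine Finset.sum_congr rfl fun k _ => ?_
      rw [Finset.mul_sum]
      exact Finset.sum_congr rfl fun j _ => by ring
    rw [h1, hBbar i, hℬ i]
    simp only [hgk]
    rw [Finset.sum_congr rfl (fun k _ => mul_add (δ k) _ _), Finset.sum_add_distrib]
    ring
  rw [Pi.add_apply, hAbarz, hdi]
  ring
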